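/- Let ρ: G → GL_d(ℂ) (d ≥ 1) be a representation whose image acts freely, i.e., det(1 − ρ(g)) ≠ 0 for every g ≠ 1 in G. For 0 ≤ a, b ≤ n define the generalized η-invariants η^a_b := (2·(−1)^d/|G|) · Σ_{k=1}^n |C_k|·χ_a(g_k)·conj(χ_b(g_k)) / det(1 − ρ(g_k)). Then for all 0 ≤ i, j ≤ n one has η^i_j = Σ_{k=0}^n ⟨χ_i·χ_k, χ_j⟩ · η^0_k. -/

import Mathlib

open CategoryTheory
open scoped Classical

/-- Inner product of class functions: `⟨a, b⟩ = (1/|G|) Σ_{g∈G} a(g)·conj(b(g))`. -/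
noncomputable def cgIP {G : Type*} [Group G] [Fintype G] (a b : G → ℂ) : ℂ :=
  (Fintype.card G : ℂ)⁻¹ * ∑ x : G, a x * (starRingEnd ℂ) (b x)

/-- The size of the conjugacy class of `x`. -/
noncomputable def classCard {G : Type*} [Group G] (x : G) : ℕ :=
  Nat.card {y : G // IsConj x y}

open Matrix in
open scoped ComplexOrder in
lemma aux_trace_star {N : ℕ} (A : Matrix (Fin N) (Fin N) ℂ) {m : ℕ} (hm : 0 < m)
    (hA : A ^ m = 1) : (starRingEnd ℂ) A.trace = (A ^ (m - 1)).trace := by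
  classical
  have hF0 : (A ^ 0)ᴴ * A ^ 0 = 1 := by simp
  have hFm : (A ^ m)ᴴ * A ^ m = 1 := by rw [hA]; simp
  have hHsplit : ∑ j ∈ Finset.range m, (A ^ j)ᴴ * A ^ j
      = 1 + ∑ j ∈ Finset.Ico 1 m, (A ^ j)ᴴ * A ^ j := by
    rw [Finset.range_eq_Ico, Finset.sum_eq_sum_Ico_succ_bot hm, hF0]
  have hpos : (∑ j ∈ Finset.range m, (A ^ j)ᴴ * A ^ j).PosDef := by
    rw [hHsplit]
    refine Matrix.PosDef.add_posSemidef Matrix.PosDef.one ?_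
    refine Finset.sum_induction _ _ (fun a b ha hb => ha.add hb) ?_ ?_
    · exact Matrix.PosSemidef.zero
    · exact fun i _ => Matrix.posSemidef_conjTranspose_mul_self _
  set H : Matrix (Fin N) (Fin N) ℂ := ∑ j ∈ Finset.range m, (A ^ j)ᴴ * A ^ j with hHdef
  have hHunit : IsUnit H.det := (Matrix.isUnit_iff_isUnit_det H).mp hpos.isUnit
  have hinv : Aᴴ * H * A = H := by
    have h1 : Aᴴ * H * A = ∑ j ∈ Finset.range m, (A ^ (j + 1))ᴴ * A ^ (j + 1) := by
      rw [hHdef, Finset.mul_sum, Finset.sum_mul]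
      refine Finset.sum_congr rfl fun j _ => ?_
      rw [show A ^ (j + 1) = A ^ j * A from pow_succ A j, Matrix.conjTranspose_mul]
      noncomm_ring
    have h2 := Finset.sum_range_succ (fun j => (A ^ j)ᴴ * A ^ j) m
    have h3 := Finset.sum_range_succ' (fun j => (A ^ j)ᴴ * A ^ j) m
    rw [h2, hFm, hF0] at h3
    rw [h1, ← add_right_cancel h3, hHdef]
  have hAr : A * A ^ (m - 1) = 1 := by
    rw [← pow_succ', Nat.sub_add_cancel hm, hA]
  have hAunit : IsUnit A.det := Matrix.isUnit_det_of_right_inverse hAr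
  have hAinv : A⁻¹ = A ^ (m - 1) := Matrix.inv_eq_right_inv hAr
  have h4 : Aᴴ = H * A⁻¹ * H⁻¹ := by
    have h5 : Aᴴ * H = H * A⁻¹ := by
      calc Aᴴ * H = Aᴴ * H * A * A⁻¹ := by
            rw [Matrix.mul_assoc (Aᴴ * H), Matrix.mul_nonsing_inv A hAunit, Matrix.mul_one]
        _ = H * A⁻¹ := by rw [hinv]
    calc Aᴴ = Aᴴ * H * H⁻¹ := by
          rw [Matrix.mul_assoc, Matrix.mul_nonsing_inv H hHunit, Matrix.mul_one]
      _ = H * A⁻¹ * H⁻¹ := by rw [h5]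
  have h6 : Aᴴ.trace = (A ^ (m - 1)).trace := by
    rw [h4, Matrix.mul_assoc, Matrix.trace_mul_comm, Matrix.mul_assoc,
      Matrix.nonsing_inv_mul H hHunit, Matrix.mul_one, hAinv]
  rw [← h6, Matrix.trace_conjTranspose]
  rfl

lemma aux_char_star {G : Type} [Group G] [Fintype G] (V : FDRep ℂ G) (x : G) :
    (starRingEnd ℂ) (V.character x) = V.character x⁻¹ := by
  classical
  set m := orderOf x with hmdef
  have hm : 0 < m := orderOf_pos x
  have hxinv : x⁻¹ = x ^ (m - 1) := by
    apply inv_eq_of_mul_eq_one_right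
    rw [← pow_succ', Nat.sub_add_cancel hm, pow_orderOf_eq_one]
  let b := Module.finBasis ℂ V
  let A := LinearMap.toMatrix b b (V.ρ x)
  have hApow : ∀ j : ℕ, LinearMap.toMatrix b b ((V.ρ x) ^ j) = A ^ j := by
    intro j
    induction j with
    | zero => simp [LinearMap.toMatrix_one]
    | succ j ih => rw [pow_succ, pow_succ, LinearMap.toMatrix_mul, ih]
  have hA : A ^ m = 1 := by
    rw [← hApow, ← map_pow, pow_orderOf_eq_one, map_one, LinearMap.toMatrix_one]
  have h1 : V.character x = A.trace := by
    rw [FDRep.character, LinearMap.trace_eq_matrix_trace ℂ b]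
  have h2 : V.character x⁻¹ = (A ^ (m - 1)).trace := by
    rw [FDRep.character, LinearMap.trace_eq_matrix_trace ℂ b, hxinv, map_pow, hApow]
  rw [h1, h2, aux_trace_star A hm hA]

lemma aux_sum_classes {G : Type} [Group G] [Fintype G] {n : ℕ}
    (g : Fin (n + 1) → G) (hg : ∀ x : G, ∃! k : Fin (n + 1), IsConj (g k) x)
    (f : G → ℂ) (hf : ∀ x y : G, IsConj x y → f x = f y) :
    ∑ x : G, f x = ∑ k : Fin (n + 1), (classCard (g k) : ℂ) * f (g k) := by
  classical
  have h := (Finset.sum_fiberwise Finset.univ (fun x : G => (hg x).exists.choose) f).symm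
  rw [h]
  refine Finset.sum_congr rfl fun k _ => ?_
  have hfilter : Finset.univ.filter (fun x : G => (hg x).exists.choose = k)
      = Finset.univ.filter (fun x : G => IsConj (g k) x) := by
    refine Finset.filter_congr fun x _ => ?_
    constructor
    · rintro rfl; exact (hg x).exists.choose_spec
    · intro hc; exact ((hg x).unique (hg x).exists.choose_spec hc).symm ▸ rfl
  rw [hfilter]
  have hcard : (Finset.univ.filter (fun x : G => IsConj (g k) x)).card = classCard (g k) := by
    rw [classCard, Nat.card_eq_fintype_card, Fintype.card_subtype]
  rw [Finset.sum_congr rfl (fun x hx => (hf (g k) x (Finset.mem_filter.mp hx).2).symm),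
    Finset.sum_const, hcard, nsmul_eq_mul]

lemma aux_orth {G : Type} [Group G] [Fintype G] (V W : FDRep ℂ G)
    [Simple V] [Simple W] :
    cgIP V.character W.character = if Nonempty (V ≅ W) then 1 else 0 := by
  classical
  haveI : Invertible ((Nat.card G : ℂ)) :=
    invertibleOfNonzero (Nat.cast_ne_zero.mpr Nat.card_pos.ne')
  have h := FDRep.char_orthonormal (k := ℂ) (G := G) V W
  rw [cgIP]
  have h2 : ∑ x : G, V.character x * (starRingEnd ℂ) (W.character x)
      = ∑ x : G, V.character x * W.character x⁻¹ :=
    Finset.sum_congr rfl fun x _ => by rw [aux_char_star]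
  rw [h2, ← h]
  rw [Nat.card_eq_fintype_card]

theorem stmt13 {G : Type} [Group G] [Fintype G] {n : ℕ}
    (g : Fin (n + 1) → G) (hg1 : g 0 = 1)
    (hg : ∀ x : G, ∃! k : Fin (n + 1), IsConj (g k) x)
    (R : Fin (n + 1) → FDRep ℂ G)
    (hsimple : ∀ i, Simple (R i))
    (htriv : ∀ x : G, (R 0).character x = 1)
    (hdist : ∀ i j, i ≠ j → ¬ Nonempty (R i ≅ R j))
    {d : ℕ} (hd : 1 ≤ d) (ρ : G →* Matrix.GeneralLinearGroup (Fin d) ℂ)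
    -- the image of `ρ` acts freely
    (hfree : ∀ x : G, x ≠ 1 →
      Matrix.det ((1 : Matrix (Fin d) (Fin d) ℂ) - (ρ x : Matrix (Fin d) (Fin d) ℂ)) ≠ 0)
    -- `η a b` : the generalized η-invariants (`k` ranges over `1, …, n`)
    (η : Fin (n + 1) → Fin (n + 1) → ℂ)
    (hη : ∀ a b, η a b =
      2 * (-1 : ℂ) ^ d / (Fintype.card G : ℂ) *
        ∑ k : Fin n, (classCard (g k.succ) : ℂ) *
          (R a).character (g k.succ) * (starRingEnd ℂ) ((R b).character (g k.succ)) /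
          Matrix.det ((1 : Matrix (Fin d) (Fin d) ℂ) -
            (ρ (g k.succ) : Matrix (Fin d) (Fin d) ℂ))) :
    ∀ i j : Fin (n + 1),
      η i j = ∑ k : Fin (n + 1),
        cgIP ((R i).character * (R k).character) ((R j).character) * η 0 k := by
  classical
  intro i j
  -- characters are class functions
  have hchar_conj : ∀ (V : FDRep ℂ G) (x y : G), IsConj x y → V.character x = V.character y := by
    intro V x y h
    obtain ⟨c, hc⟩ := isConj_iff.mp h
    rw [← hc, FDRep.char_conj]
  -- row orthogonality
  have horth : ∀ k l : Fin (n + 1),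
      cgIP ((R k).character) ((R l).character) = if k = l then 1 else 0 := by
    intro k l
    haveI := hsimple k
    haveI := hsimple l
    rw [aux_orth]
    by_cases h : k = l
    · subst h; rw [if_pos rfl, if_pos ⟨Iso.refl _⟩]
    · rw [if_neg h, if_neg (hdist k l h)]
  -- expansion of `cgIP` over conjugacy classes
  have hexp : ∀ k l m : Fin (n + 1), cgIP ((R k).character) ((R l).character)
      = (Fintype.card G : ℂ)⁻¹ * ∑ m' : Fin (n + 1), (classCard (g m') : ℂ) *
          ((R k).character (g m') * (starRingEnd ℂ) ((R l).character (g m'))) := by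
    intro k l m
    rw [cgIP]
    congr 1
    exact aux_sum_classes g hg _ (fun x y h => by
      rw [hchar_conj (R k) x y h, hchar_conj (R l) x y h])
  -- column orthogonality
  have hcol : ∀ m m' : Fin (n + 1),
      ∑ l : Fin (n + 1), ((starRingEnd ℂ) ((R l).character (g m)) * (Fintype.card G : ℂ)⁻¹) *
        ((R l).character (g m') * (classCard (g m') : ℂ)) = if m = m' then 1 else 0 := by
    have hAB : (Matrix.of fun k m : Fin (n + 1) => (R k).character (g m) * (classCard (g m) : ℂ))
        * (Matrix.of fun m l : Fin (n + 1) =>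
            (starRingEnd ℂ) ((R l).character (g m)) * (Fintype.card G : ℂ)⁻¹) = 1 := by
      ext k l
      rw [Matrix.mul_apply, Matrix.one_apply, ← horth k l, hexp k l 0, Finset.mul_sum]
      refine Finset.sum_congr rfl fun m' _ => ?_
      simp only [Matrix.of_apply]
      ring
    have hBA := mul_eq_one_comm.mp hAB
    intro m m'
    have h := congrFun (congrFun (congrArg (fun M => (M : Matrix _ _ ℂ)) hBA) m) m'
    simpa [Matrix.mul_apply, Matrix.one_apply] using h
  -- the key identity
  have hexp2 : ∀ k : Fin (n + 1), cgIP ((R i).character * (R k).character) ((R j).character)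
      = (Fintype.card G : ℂ)⁻¹ * ∑ m' : Fin (n + 1), (classCard (g m') : ℂ) *
          ((R i).character (g m') * (R k).character (g m') *
            (starRingEnd ℂ) ((R j).character (g m'))) := by
    intro k
    rw [cgIP]
    congr 1
    have := aux_sum_classes g hg
      (fun x => ((R i).character * (R k).character) x * (starRingEnd ℂ) ((R j).character x))
      (fun x y h => by
        simp only [Pi.mul_apply]
        rw [hchar_conj (R i) x y h, hchar_conj (R k) x y h, hchar_conj (R j) x y h])
    rw [this]
    exact Finset.sum_congr rfl fun m' _ => by simp only [Pi.mul_apply]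
  have hkey : ∀ m : Fin (n + 1),
      (∑ k : Fin (n + 1), cgIP ((R i).character * (R k).character) ((R j).character) *
        (starRingEnd ℂ) ((R k).character (g m)))
      = (R i).character (g m) * (starRingEnd ℂ) ((R j).character (g m)) := by
    intro m
    calc ∑ k : Fin (n + 1), cgIP ((R i).character * (R k).character) ((R j).character) *
          (starRingEnd ℂ) ((R k).character (g m))
        = ∑ k : Fin (n + 1), ∑ m' : Fin (n + 1),
            ((R i).character (g m') * (starRingEnd ℂ) ((R j).character (g m'))) *
              (((starRingEnd ℂ) ((R k).character (g m)) * (Fintype.card G : ℂ)⁻¹) *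
                ((R k).character (g m') * (classCard (g m') : ℂ))) := by
          refine Finset.sum_congr rfl fun k _ => ?_
          rw [hexp2 k, Finset.mul_sum, Finset.sum_mul]
          exact Finset.sum_congr rfl fun m' _ => by ring
      _ = ∑ m' : Fin (n + 1),
            ((R i).character (g m') * (starRingEnd ℂ) ((R j).character (g m'))) *
              ∑ k : Fin (n + 1), ((starRingEnd ℂ) ((R k).character (g m)) *
                (Fintype.card G : ℂ)⁻¹) * ((R k).character (g m') * (classCard (g m') : ℂ)) := by
          rw [Finset.sum_comm]
          exact Finset.sum_congr rfl fun m' _ => (Finset.mul_sum _ _ _).symm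
      _ = ∑ m' : Fin (n + 1),
            ((R i).character (g m') * (starRingEnd ℂ) ((R j).character (g m'))) *
              (if m = m' then 1 else 0) := by
          exact Finset.sum_congr rfl fun m' _ => by rw [hcol m m']
      _ = (R i).character (g m) * (starRingEnd ℂ) ((R j).character (g m)) := by
          simp
  -- final computation
  calc η i j
      = 2 * (-1 : ℂ) ^ d / (Fintype.card G : ℂ) *
          ∑ t : Fin n, (classCard (g t.succ) : ℂ) *
            (R i).character (g t.succ) * (starRingEnd ℂ) ((R j).character (g t.succ)) /
            Matrix.det ((1 : Matrix (Fin d) (Fin d) ℂ) -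
              (ρ (g t.succ) : Matrix (Fin d) (Fin d) ℂ)) := hη i j
    _ = ∑ t : Fin n,
          ((R i).character (g t.succ) * (starRingEnd ℂ) ((R j).character (g t.succ))) *
            (2 * (-1 : ℂ) ^ d / (Fintype.card G : ℂ) * (classCard (g t.succ) : ℂ) /
              Matrix.det ((1 : Matrix (Fin d) (Fin d) ℂ) -
                (ρ (g t.succ) : Matrix (Fin d) (Fin d) ℂ))) := by
        rw [Finset.mul_sum]
        exact Finset.sum_congr rfl fun t _ => by ring
    _ = ∑ t : Fin n,
          (∑ k : Fin (n + 1), cgIP ((R i).character * (R k).character) ((R j).character) *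
            (starRingEnd ℂ) ((R k).character (g t.succ))) *
            (2 * (-1 : ℂ) ^ d / (Fintype.card G : ℂ) * (classCard (g t.succ) : ℂ) /
              Matrix.det ((1 : Matrix (Fin d) (Fin d) ℂ) -
                (ρ (g t.succ) : Matrix (Fin d) (Fin d) ℂ))) := by
        exact Finset.sum_congr rfl fun t _ => by rw [hkey t.succ]
    _ = ∑ t : Fin n, ∑ k : Fin (n + 1),
          cgIP ((R i).character * (R k).character) ((R j).character) *
            (starRingEnd ℂ) ((R k).character (g t.succ)) *
            (2 * (-1 : ℂ) ^ d / (Fintype.card G : ℂ) * (classCard (g t.succ) : ℂ) /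
              Matrix.det ((1 : Matrix (Fin d) (Fin d) ℂ) -
                (ρ (g t.succ) : Matrix (Fin d) (Fin d) ℂ))) := by
        exact Finset.sum_congr rfl fun t _ => Finset.sum_mul _ _ _
    _ = ∑ k : Fin (n + 1), ∑ t : Fin n,
          cgIP ((R i).character * (R k).character) ((R j).character) *
            (starRingEnd ℂ) ((R k).character (g t.succ)) *
            (2 * (-1 : ℂ) ^ d / (Fintype.card G : ℂ) * (classCard (g t.succ) : ℂ) /
              Matrix.det ((1 : Matrix (Fin d) (Fin d) ℂ) -
                (ρ (g t.succ) : Matrix (Fin d) (Fin d) ℂ))) := by exact Finset.sum_comm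
    _ = ∑ k : Fin (n + 1),
        cgIP ((R i).character * (R k).character) ((R j).character) * η 0 k := by
        refine Finset.sum_congr rfl fun k _ => ?_
        rw [hη 0 k, Finset.mul_sum, Finset.mul_sum]
        refine Finset.sum_congr rfl fun t _ => ?_
        rw [htriv (g t.succ)]
        ring
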